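/- arXiv:2009.13129 — 5 statements merged into one kernel-verified Lean document; each statement's English description precedes it below -/
import Mathlib

section
/- Let O, D be independent random times and τ > 0. Define T = min(O,D)·1{D ≤ τ} + O·1{D > τ}. Then P(T > t) = S_O(t) · [ (S_D(t) − S_D(τ))·1{t ≤ τ} + S_D(τ) ] for all t ≥ 0. -/
open MeasureTheory ProbabilityTheory
open scoped ENNReal

/-- Cure-time model survival representation: for independent random times `O, D` and `τ > 0`,
with `T = min(O,D)·1{D ≤ τ} + O·1{D > τ}`,
`P(T > t) = S_O(t) · [(S_D(t) − S_D(τ))·1{t ≤ τ} + S_D(τ)]` for all `t ≥ 0`. -/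
theorem stmt4 {Ω : Type*} [MeasurableSpace Ω] (μ : Measure Ω) [IsProbabilityMeasure μ]
    (O D : Ω → ℝ) (hOm : Measurable O) (hDm : Measurable D)
    (hindep : IndepFun O D μ) (τ : ℝ) (hτ : 0 < τ) :
    ∀ t : ℝ, 0 ≤ t →
      μ {ω | t < (if D ω ≤ τ then min (O ω) (D ω) else O ω)} =
        μ {ω | t < O ω} *
          ((if t ≤ τ then μ {ω | t < D ω} - μ {ω | τ < D ω} else 0) + μ {ω | τ < D ω}) := by
  intro t ht
  have hmul : ∀ s : ℝ, μ (O ⁻¹' Set.Ioi t ∩ D ⁻¹' Set.Ioi s) =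
      μ {ω | t < O ω} * μ {ω | s < D ω} := fun s =>
    hindep.measure_inter_preimage_eq_mul _ _ measurableSet_Ioi measurableSet_Ioi
  by_cases htτ : t ≤ τ
  · rw [if_pos htτ]
    have hset : {ω | t < (if D ω ≤ τ then min (O ω) (D ω) else O ω)} =
        O ⁻¹' Set.Ioi t ∩ D ⁻¹' Set.Ioi t := by
      ext ω
      by_cases h : D ω ≤ τ <;>
        simp [h, Set.mem_Ioi, lt_min_iff, and_comm] <;>
        intro _ <;> linarith
    rw [hset, hmul t, tsub_add_cancel_of_le]
    exact measure_mono fun ω hω => lt_of_le_of_lt htτ hω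
  · rw [if_neg htτ, zero_add]
    push_neg at htτ
    have hset : {ω | t < (if D ω ≤ τ then min (O ω) (D ω) else O ω)} =
        O ⁻¹' Set.Ioi t ∩ D ⁻¹' Set.Ioi τ := by
      ext ω
      by_cases h : D ω ≤ τ
      · simp only [if_pos h, Set.mem_setOf_eq, Set.mem_inter_iff, Set.mem_preimage,
          Set.mem_Ioi, lt_min_iff]
        constructor
        · rintro ⟨_, h2⟩; exact absurd h2 (by linarith)
        · rintro ⟨_, h2⟩; exact absurd h2 (by linarith)
      · simp only [if_neg h, Set.mem_setOf_eq, Set.mem_inter_iff, Set.mem_preimage, Set.mem_Ioi]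
        exact ⟨fun h1 => ⟨h1, not_le.mp h⟩, fun h1 => h1.1⟩
    rw [hset, hmul τ]
end

section
/- Let O, D be independent random times and τ > 0 with S_O(τ) S_D(τ) > 0. If T = min(O,D)·1{D ≤ τ} + O·1{D > τ}, then for all t > τ, P(T > t | T > τ) = P(O > t | O > τ). -/
open MeasureTheory ProbabilityTheory
open scoped ENNReal

/-- The cure-time random-variable representation implies statistical cure: for independent
`O, D` with `S_O(τ) > 0`, `S_D(τ) > 0`, and `T = min(O,D)·1{D ≤ τ} + O·1{D > τ}`, one has
`P(T > t | T > τ) = P(O > t | O > τ)` for all `t > τ`. -/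
theorem stmt5 {Ω : Type*} [MeasurableSpace Ω] (μ : Measure Ω) [IsProbabilityMeasure μ]
    (O D : Ω → ℝ) (hOm : Measurable O) (hDm : Measurable D)
    (hindep : IndepFun O D μ) (τ : ℝ) (hτ : 0 < τ)
    (hSO : μ {ω | τ < O ω} ≠ 0) (hSD : μ {ω | τ < D ω} ≠ 0) :
    ∀ t : ℝ, τ < t →
      μ ({ω | t < (if D ω ≤ τ then min (O ω) (D ω) else O ω)} ∩
          {ω | τ < (if D ω ≤ τ then min (O ω) (D ω) else O ω)}) /
        μ {ω | τ < (if D ω ≤ τ then min (O ω) (D ω) else O ω)} =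
      μ ({ω | t < O ω} ∩ {ω | τ < O ω}) / μ {ω | τ < O ω} := by
  intro t ht
  have hset : ∀ s : ℝ, τ ≤ s →
      {ω | s < (if D ω ≤ τ then min (O ω) (D ω) else O ω)}
        = O ⁻¹' Set.Ioi s ∩ D ⁻¹' Set.Ioi τ := by
    intro s hs
    ext ω
    simp only [Set.mem_setOf_eq, Set.mem_inter_iff, Set.mem_preimage, Set.mem_Ioi]
    by_cases h : D ω ≤ τ
    · simp only [if_pos h]
      constructor
      · intro hlt
        have : min (O ω) (D ω) ≤ τ := (min_le_right _ _).trans h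
        exact absurd hlt (by linarith)
      · rintro ⟨_, hD⟩; linarith
    · simp only [if_neg h]
      push_neg at h
      constructor
      · intro hO; exact ⟨hO, h⟩
      · rintro ⟨hO, _⟩; exact hO
  have h1 := hset τ le_rfl
  have h2 := hset t ht.le
  have hint : O ⁻¹' Set.Ioi t ∩ D ⁻¹' Set.Ioi τ ∩ (O ⁻¹' Set.Ioi τ ∩ D ⁻¹' Set.Ioi τ)
      = O ⁻¹' Set.Ioi t ∩ D ⁻¹' Set.Ioi τ := by
    ext ω
    simp only [Set.mem_inter_iff, Set.mem_preimage, Set.mem_Ioi]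
    constructor
    · rintro ⟨h, _⟩; exact h
    · rintro ⟨hO, hD⟩; exact ⟨⟨hO, hD⟩, ⟨ht.trans hO, hD⟩⟩
  have hOt : {ω | t < O ω} ∩ {ω | τ < O ω} = O ⁻¹' Set.Ioi t := by
    ext ω
    simp only [Set.mem_inter_iff, Set.mem_setOf_eq, Set.mem_preimage, Set.mem_Ioi]
    exact ⟨fun h => h.1, fun h => ⟨h, ht.trans h⟩⟩
  have hmul := fun (a : ℝ) => hindep.measure_inter_preimage_eq_mul (Set.Ioi a) (Set.Ioi τ)
    measurableSet_Ioi measurableSet_Ioi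
  have hOτ : {ω | τ < O ω} = O ⁻¹' Set.Ioi τ := rfl
  have hDτ : {ω | τ < D ω} = D ⁻¹' Set.Ioi τ := rfl
  rw [h1, h2, hint, hOt, hmul t, hmul τ, hOτ]
  rw [ENNReal.mul_div_mul_right _ _ (hDτ ▸ hSD) (measure_ne_top μ _)]
end

section
/- Let O, D be independent absolutely continuous random times with hazard rates h_O, h_D, and let τ > 0. The random time T = min(O,D)·1{D ≤ τ} + O·1{D > τ} has survival function exp(−∫_0^t (h_O(u) + h_D(u)·1{u ≤ τ}) du) for t ≥ 0, i.e., its hazard is h_T(t) = h_O(t) + h_D(t)·1{t ≤ τ}. -/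
open MeasureTheory ProbabilityTheory
open scoped ENNReal

/-- Hazard representation of the cure-time model: if independent `O, D` have hazard rates
`hO, hD` (so `P(X > t) = exp(−∫_0^t h_X)` for `t ≥ 0`), then
`T = min(O,D)·1{D ≤ τ} + O·1{D > τ}` has survival function
`exp(−∫_0^t (hO(u) + hD(u)·1{u ≤ τ}) du)` for `t ≥ 0`, i.e. hazard
`h_T(t) = hO(t) + hD(t)·1{t ≤ τ}`. -/
theorem stmt7 {Ω : Type*} [MeasurableSpace Ω] (μ : Measure Ω) [IsProbabilityMeasure μ]
    (O D : Ω → ℝ) (hOm : Measurable O) (hDm : Measurable D)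
    (hindep : IndepFun O D μ)
    (hO hD : ℝ → ℝ) (hOnn : ∀ u, 0 ≤ hO u) (hDnn : ∀ u, 0 ≤ hD u)
    (hOint : ∀ t : ℝ, IntervalIntegrable hO volume 0 t)
    (hDint : ∀ t : ℝ, IntervalIntegrable hD volume 0 t)
    (hSO : ∀ t : ℝ, 0 ≤ t →
      μ {ω | t < O ω} = ENNReal.ofReal (Real.exp (-∫ u in (0:ℝ)..t, hO u)))
    (hSD : ∀ t : ℝ, 0 ≤ t →
      μ {ω | t < D ω} = ENNReal.ofReal (Real.exp (-∫ u in (0:ℝ)..t, hD u)))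
    (τ : ℝ) (hτ : 0 < τ) :
    ∀ t : ℝ, 0 ≤ t →
      μ {ω | t < (if D ω ≤ τ then min (O ω) (D ω) else O ω)} =
        ENNReal.ofReal
          (Real.exp (-∫ u in (0:ℝ)..t, (hO u + hD u * (if u ≤ τ then 1 else 0)))) := by
  intro t ht
  set g : ℝ → ℝ := fun u => hD u * (if u ≤ τ then 1 else 0) with hg_def
  have hg_eq : g = Set.indicator (Set.Iic τ) hD := by
    funext u
    simp only [hg_def, Set.indicator_apply, Set.mem_Iic]
    split_ifs <;> ring
  have hgint : ∀ a b : ℝ, IntervalIntegrable g volume a b := by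
    intro a b
    have hDab : IntervalIntegrable hD volume a b :=
      ((hDint a).symm.trans (hDint b))
    rw [hg_eq]
    constructor
    · exact hDab.1.indicator measurableSet_Iic
    · exact hDab.2.indicator measurableSet_Iic
  have hsplit : ∫ u in (0:ℝ)..t, (hO u + g u) =
      (∫ u in (0:ℝ)..t, hO u) + ∫ u in (0:ℝ)..t, g u :=
    intervalIntegral.integral_add (hOint t) (hgint 0 t)
  have key : ∀ (a b : ℝ), μ {ω | a < O ω} * μ {ω | b < D ω} =
      μ ({ω | a < O ω} ∩ {ω | b < D ω}) := by
    intro a b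
    have : O ⁻¹' (Set.Ioi a) = {ω | a < O ω} := rfl
    have h := hindep.measure_inter_preimage_eq_mul (Set.Ioi a) (Set.Ioi b)
      measurableSet_Ioi measurableSet_Ioi
    exact h.symm
  by_cases htτ : t ≤ τ
  · -- case t ≤ τ
    have hset : {ω | t < (if D ω ≤ τ then min (O ω) (D ω) else O ω)} =
        {ω | t < O ω} ∩ {ω | t < D ω} := by
      ext ω
      simp only [Set.mem_setOf_eq, Set.mem_inter_iff]
      split_ifs with h
      · rw [lt_min_iff]
      · constructor
        · intro hh; exact ⟨hh, by linarith [not_le.mp h]⟩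
        · intro hh; exact hh.1
    have hgt : ∫ u in (0:ℝ)..t, g u = ∫ u in (0:ℝ)..t, hD u := by
      apply intervalIntegral.integral_congr
      intro u hu
      rw [Set.uIcc_of_le ht] at hu
      have : u ≤ τ := le_trans hu.2 htτ
      simp [hg_def, this]
    rw [hset, ← key t t, hSO t ht, hSD t ht, hsplit, hgt,
      ← ENNReal.ofReal_mul (Real.exp_pos _).le, ← Real.exp_add]
    ring_nf
  · -- case τ < t
    push_neg at htτ
    have hset : {ω | t < (if D ω ≤ τ then min (O ω) (D ω) else O ω)} =
        {ω | t < O ω} ∩ {ω | τ < D ω} := by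
      ext ω
      simp only [Set.mem_setOf_eq, Set.mem_inter_iff]
      split_ifs with h
      · rw [lt_min_iff]
        constructor
        · intro hh; exact absurd (lt_of_lt_of_le hh.2 h) (lt_asymm htτ)
        · intro hh; exact absurd hh.2 (not_lt.mpr h)
      · constructor
        · intro hh; exact ⟨hh, not_le.mp h⟩
        · intro hh; exact hh.1
    have hgt : ∫ u in (0:ℝ)..t, g u = ∫ u in (0:ℝ)..τ, hD u := by
      have hadd : (∫ u in (0:ℝ)..τ, g u) + (∫ u in τ..t, g u) =
          ∫ u in (0:ℝ)..t, g u :=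
        intervalIntegral.integral_add_adjacent_intervals (hgint 0 τ) (hgint τ t)
      have h1 : ∫ u in (0:ℝ)..τ, g u = ∫ u in (0:ℝ)..τ, hD u := by
        apply intervalIntegral.integral_congr
        intro u hu
        rw [Set.uIcc_of_le hτ.le] at hu
        simp [hg_def, hu.2]
      have h2 : ∫ u in τ..t, g u = 0 := by
        rw [intervalIntegral.integral_of_le htτ.le]
        apply MeasureTheory.setIntegral_eq_zero_of_forall_eq_zero
        intro u hu
        have : ¬ u ≤ τ := not_le.mpr hu.1
        simp [hg_def, this]
      rw [← hadd, h1, h2, add_zero]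
    rw [hset, ← key t τ, hSO t ht, hSD τ hτ.le, hsplit, hgt,
      ← ENNReal.ofReal_mul (Real.exp_pos _).le, ← Real.exp_add]
    ring_nf
end

section
/- Let O, D, C be mutually independent absolutely continuous nonnegative random variables and τ > 0. Define T = min(O,D)·1{D ≤ τ} + O·1{D > τ}, Z = min(T,C). Then P(Z > z, Z = O) = ∫_z^∞ U_D(o;τ) f_O(o) S_C(o) do, where U_D(o;τ) = (S_D(o) − S_D(τ))·1{o ≤ τ} + S_D(τ); hence the sub-density of observing death from other causes at time z is U_D(z;τ) f_O(z) S_C(z). -/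
open MeasureTheory ProbabilityTheory
open scoped ENNReal

/-- Likelihood contribution for death from other causes (`δ = 1`) in the cure time model:
for mutually independent absolutely continuous `O, D, C` and `τ > 0`, with
`T = min(O,D)·1{D ≤ τ} + O·1{D > τ}`, `Z = min(T,C)`,
`P(Z > z, Z = O) = ∫_z^∞ U_D(o;τ) f_O(o) S_C(o) do` where
`U_D(o;τ) = (S_D(o) − S_D(τ))·1{o ≤ τ} + S_D(τ)`; hence the sub-density is
`U_D(z;τ) f_O(z) S_C(z)`. -/
theorem stmt13 {Ω : Type*} [MeasurableSpace Ω] (μ : Measure Ω) [IsProbabilityMeasure μ]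
    (O D C : Ω → ℝ) (hOm : Measurable O) (hDm : Measurable D) (hCm : Measurable C)
    (hOnn : ∀ ω, 0 ≤ O ω) (hDnn : ∀ ω, 0 ≤ D ω) (hCnn : ∀ ω, 0 ≤ C ω)
    (hindep : iIndepFun ![O, D, C] μ)
    (τ : ℝ) (hτ : 0 < τ)
    (fO : ℝ → ℝ) (hfOm : Measurable fO) (hfOnn : ∀ o, 0 ≤ fO o)
    (hOmap : Measure.map O μ = volume.withDensity (fun o => ENNReal.ofReal (fO o)))
    (hDcont : ∀ t : ℝ, μ {ω | D ω = t} = 0)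
    (hCcont : ∀ t : ℝ, μ {ω | C ω = t} = 0)
    (SD SC U : ℝ → ℝ)
    (hSD : ∀ t, SD t = (μ {ω | t < D ω}).toReal)
    (hSC : ∀ t, SC t = (μ {ω | t < C ω}).toReal)
    (hU : ∀ t, U t = (SD t - SD τ) * (if t ≤ τ then 1 else 0) + SD τ) :
    (∀ z : ℝ, μ {ω | z < O ω ∧ O ω < C ω ∧ (O ω < D ω ∨ τ < D ω)} =
      ENNReal.ofReal (∫ o in Set.Ioi z, U o * fO o * SC o)) ∧
    (∀ s : Set ℝ, MeasurableSet s →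
      μ {ω | O ω ∈ s ∧ O ω < C ω ∧ (O ω < D ω ∨ τ < D ω)} =
        ∫⁻ o in s, ENNReal.ofReal (U o * fO o * SC o)) := by
  have hmeas : ∀ i, Measurable (![O, D, C] i) := by
    intro i; fin_cases i <;> simpa
  have hWm : Measurable (fun ω => (D ω, C ω)) := hDm.prodMk hCm
  have hDC : IndepFun (fun ω => (D ω, C ω)) O μ := by
    have := hindep.indepFun_prodMk hmeas 1 2 0 (by decide) (by decide)
    simpa using this
  have hODC : IndepFun O (fun ω => (D ω, C ω)) μ := hDC.symm
  have hDCindep : IndepFun D C μ := by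
    have := hindep.indepFun (i := 1) (j := 2) (by decide)
    simpa using this
  have hmapPair : μ.map (fun ω => (O ω, (D ω, C ω))) =
      (μ.map O).prod (μ.map (fun ω => (D ω, C ω))) :=
    (indepFun_iff_map_prod_eq_prod_map_map hOm.aemeasurable hWm.aemeasurable).1 hODC
  have hmapW : μ.map (fun ω => (D ω, C ω)) = (μ.map D).prod (μ.map C) :=
    (indepFun_iff_map_prod_eq_prod_map_map hDm.aemeasurable hCm.aemeasurable).1 hDCindep
  -- basic facts about SD, SC, U
  have hSDnn : ∀ t, 0 ≤ SD t := fun t => by rw [hSD]; exact ENNReal.toReal_nonneg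
  have hSCnn : ∀ t, 0 ≤ SC t := fun t => by rw [hSC]; exact ENNReal.toReal_nonneg
  have hSDanti : Antitone SD := by
    intro a b hab
    rw [hSD, hSD]
    exact ENNReal.toReal_mono (measure_ne_top μ _)
      (measure_mono (fun ω h => lt_of_le_of_lt hab h))
  have hSCanti : Antitone SC := by
    intro a b hab
    rw [hSC, hSC]
    exact ENNReal.toReal_mono (measure_ne_top μ _)
      (measure_mono (fun ω h => lt_of_le_of_lt hab h))
  have hUmin : ∀ o, U o = SD (min o τ) := by
    intro o
    rcases le_or_gt o τ with h | h
    · rw [hU, if_pos h, min_eq_left h]; ring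
    · rw [hU, if_neg (not_le.mpr h), min_eq_right h.le]; ring
  have hUnn : ∀ o, 0 ≤ U o := fun o => (hUmin o) ▸ hSDnn _
  have hUm : Measurable U := by
    have hU' : U = fun o => SD (min o τ) := funext hUmin
    rw [hU']
    exact hSDanti.measurable.comp (measurable_id.min measurable_const)
  have hDof : ∀ t : ℝ, μ.map D (Set.Ioi t) = ENNReal.ofReal (SD t) := by
    intro t
    rw [Measure.map_apply hDm measurableSet_Ioi, hSD,
      ENNReal.ofReal_toReal (measure_ne_top μ _)]
    rfl
  have hCof : ∀ t : ℝ, μ.map C (Set.Ioi t) = ENNReal.ofReal (SC t) := by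
    intro t
    rw [Measure.map_apply hCm measurableSet_Ioi, hSC,
      ENNReal.ofReal_toReal (measure_ne_top μ _)]
    rfl
  -- the key identity, for general measurable s
  have key : ∀ s : Set ℝ, MeasurableSet s →
      μ {ω | O ω ∈ s ∧ O ω < C ω ∧ (O ω < D ω ∨ τ < D ω)} =
        ∫⁻ o in s, ENNReal.ofReal (U o * fO o * SC o) := by
    intro s hs
    set B : Set (ℝ × (ℝ × ℝ)) :=
      {p | p.1 ∈ s ∧ p.1 < p.2.2 ∧ (p.1 < p.2.1 ∨ τ < p.2.1)} with hB
    have hBmeas : MeasurableSet B := by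
      refine (hs.preimage measurable_fst).inter ?_
      refine (measurableSet_lt measurable_fst (measurable_snd.comp measurable_snd)).inter ?_
      exact (measurableSet_lt measurable_fst (measurable_fst.comp measurable_snd)).union
        (measurableSet_lt measurable_const (measurable_fst.comp measurable_snd))
    have h1 : μ {ω | O ω ∈ s ∧ O ω < C ω ∧ (O ω < D ω ∨ τ < D ω)} =
        μ.map (fun ω => (O ω, (D ω, C ω))) B := by
      rw [Measure.map_apply (hOm.prodMk hWm) hBmeas]
      rfl
    have hslice : ∀ o : ℝ, ((μ.map D).prod (μ.map C)) (Prod.mk o ⁻¹' B)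
        = s.indicator (fun o => ENNReal.ofReal (U o) * ENNReal.ofReal (SC o)) o := by
      intro o
      by_cases ho : o ∈ s
      · have hpre : Prod.mk o ⁻¹' B = (Set.Ioi (min o τ)) ×ˢ (Set.Ioi o) := by
          ext q
          simp only [hB, Set.mem_preimage, Set.mem_setOf_eq, Set.mem_prod, Set.mem_Ioi,
            min_lt_iff, ho, true_and]
          tauto
        rw [hpre, Measure.prod_prod, hDof, hCof, Set.indicator_of_mem ho, ← hUmin]
      · have hpre : Prod.mk o ⁻¹' B = (∅ : Set (ℝ × ℝ)) := by
          ext q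
          simp [hB, ho]
        rw [hpre, measure_empty, Set.indicator_of_notMem ho]
    rw [h1, hmapPair, hmapW, Measure.prod_apply hBmeas]
    calc ∫⁻ o, ((μ.map D).prod (μ.map C)) (Prod.mk o ⁻¹' B) ∂(μ.map O)
        = ∫⁻ o, s.indicator (fun o => ENNReal.ofReal (U o) * ENNReal.ofReal (SC o)) o
            ∂(μ.map O) := lintegral_congr hslice
      _ = ∫⁻ o in s, ENNReal.ofReal (U o) * ENNReal.ofReal (SC o) ∂(μ.map O) :=
          lintegral_indicator hs _
      _ = ∫⁻ o in s, ENNReal.ofReal (fO o) *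
            (ENNReal.ofReal (U o) * ENNReal.ofReal (SC o)) := by
          rw [hOmap, restrict_withDensity hs]
          exact lintegral_withDensity_eq_lintegral_mul _ (hfOm.ennreal_ofReal)
              ((hUm.ennreal_ofReal).mul (hSCanti.measurable.ennreal_ofReal))
      _ = ∫⁻ o in s, ENNReal.ofReal (U o * fO o * SC o) := by
          refine lintegral_congr fun o => ?_
          rw [ENNReal.ofReal_mul (mul_nonneg (hUnn o) (hfOnn o)),
            ENNReal.ofReal_mul (hUnn o)]
          ring
  refine ⟨fun z => ?_, key⟩
  have h2 := key (Set.Ioi z) measurableSet_Ioi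
  have hset : {ω | z < O ω ∧ O ω < C ω ∧ (O ω < D ω ∨ τ < D ω)} =
      {ω | O ω ∈ Set.Ioi z ∧ O ω < C ω ∧ (O ω < D ω ∨ τ < D ω)} := rfl
  rw [hset, h2]
  have hnn : 0 ≤ᵐ[volume.restrict (Set.Ioi z)] fun o => U o * fO o * SC o :=
    Filter.Eventually.of_forall fun o =>
      mul_nonneg (mul_nonneg (hUnn o) (hfOnn o)) (hSCnn o)
  have hfmeas : Measurable fun o => U o * fO o * SC o :=
    (hUm.mul hfOm).mul hSCanti.measurable
  have hint : Integrable (fun o => U o * fO o * SC o) (volume.restrict (Set.Ioi z)) := by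
    refine ⟨hfmeas.aestronglyMeasurable, ?_⟩
    rw [hasFiniteIntegral_iff_ofReal hnn, ← h2]
    exact measure_lt_top μ _
  exact (ofReal_integral_eq_lintegral_ofReal hint hnn).symm
end

section
/- Let O, D, C be mutually independent absolutely continuous nonnegative random variables and τ > 0, T = min(O,D)·1{D ≤ τ} + O·1{D > τ}. Then the density of T at t equals (h_O(t) + h_D(t)·1{t ≤ τ}) · S_O(t) · U_D(t;τ), where h_O, h_D are the hazards of O and D and U_D(t;τ) = (S_D(t) − S_D(τ))·1{t ≤ τ} + S_D(τ). -/
open MeasureTheory ProbabilityTheory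
open scoped ENNReal


lemma density_zero_of_survival_zero (f : ℝ → ℝ) (hm : Measurable f) (hnn : ∀ t, 0 ≤ f t)
    (ν : Measure ℝ) (hν : ν = volume.withDensity (fun t => ENNReal.ofReal (f t))) :
    ∀ᵐ t ∂(volume : Measure ℝ), ν (Set.Ioi t) = 0 → f t = 0 := by
  set A : Set ℝ := {t | ν (Set.Ioi t) = 0} with hA
  have hup : ∀ a ∈ A, ∀ t, a ≤ t → t ∈ A := by
    intro a ha t hat
    exact measure_mono_null (Set.Ioi_subset_Ioi hat) ha
  have key : ∀ a ∈ A, volume {t | a < t ∧ f t ≠ 0} = 0 := by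
    intro a ha
    have h0 : ∫⁻ t in Set.Ioi a, ENNReal.ofReal (f t) = 0 := by
      rw [← withDensity_apply _ measurableSet_Ioi, ← hν]; exact ha
    have h1 := (setLIntegral_eq_zero_iff measurableSet_Ioi hm.ennreal_ofReal).mp h0
    rw [ae_iff] at h1
    refine measure_mono_null (fun t ht => ?_) h1
    simp only [Set.mem_setOf_eq, Set.mem_Ioi, not_forall] at ht ⊢
    refine ⟨ht.1, ?_⟩
    simp only [ENNReal.ofReal_eq_zero, not_le]
    exact lt_of_le_of_ne (hnn t) (Ne.symm ht.2)
  rw [ae_iff]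
  have hsub : {t | ¬ (ν (Set.Ioi t) = 0 → f t = 0)} ⊆
      {t | t ∈ A ∧ ∀ a ∈ A, ¬ a < t} ∪ ⋃ q : ℚ, {t | (q:ℝ) ∈ A ∧ (q:ℝ) < t ∧ f t ≠ 0} := by
    intro t ht
    simp only [Set.mem_setOf_eq, not_forall] at ht
    obtain ⟨htA, htf⟩ := ht
    by_cases hex : ∃ a ∈ A, a < t
    · obtain ⟨a, haA, hat⟩ := hex
      obtain ⟨q, hq1, hq2⟩ := exists_rat_btwn hat
      exact Or.inr (Set.mem_iUnion.mpr ⟨q, hup a haA q hq1.le, hq2, htf⟩)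
    · push_neg at hex
      exact Or.inl ⟨htA, fun a ha => not_lt.mpr (hex a ha)⟩
  refine measure_mono_null hsub (measure_union_null ?_ ?_)
  · apply Set.Subsingleton.measure_zero
    intro t1 h1 t2 h2
    by_contra hne
    rcases lt_or_gt_of_ne hne with h | h
    · exact h2.2 t1 h1.1 h
    · exact h1.2 t2 h2.1 h
  · refine measure_iUnion_null fun q => ?_
    by_cases hq : (q:ℝ) ∈ A
    · exact measure_mono_null (fun t ht => ht.2) (key _ hq)
    · convert measure_empty (μ := (volume : Measure ℝ))
      ext t; simp [hq]


/-- Likelihood contribution `δ = 3` in the cure time model: for independent absolutely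
continuous `O, D` with hazards `hO = f_O/S_O`, `hD = f_D/S_D`, and `τ > 0`, the random time
`T = min(O,D)·1{D ≤ τ} + O·1{D > τ}` has density
`f_T(t) = (hO(t) + hD(t)·1{t ≤ τ}) · S_O(t) · U_D(t;τ)`,
where `U_D(t;τ) = (S_D(t) − S_D(τ))·1{t ≤ τ} + S_D(τ)`. -/
theorem stmt15 {Ω : Type*} [MeasurableSpace Ω] (μ : Measure Ω) [IsProbabilityMeasure μ]
    (O D : Ω → ℝ) (hOmeas : Measurable O) (hDmeas : Measurable D)
    (hOnn : ∀ ω, 0 ≤ O ω) (hDnn : ∀ ω, 0 ≤ D ω)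
    (hindep : IndepFun O D μ) (τ : ℝ) (hτ : 0 < τ)
    (fO fD : ℝ → ℝ) (hfOm : Measurable fO) (hfDm : Measurable fD)
    (hfOnn : ∀ t, 0 ≤ fO t) (hfDnn : ∀ t, 0 ≤ fD t)
    (hOmap : Measure.map O μ = volume.withDensity (fun t => ENNReal.ofReal (fO t)))
    (hDmap : Measure.map D μ = volume.withDensity (fun t => ENNReal.ofReal (fD t)))
    (SO SD U hO hD : ℝ → ℝ)
    (hSO : ∀ t, SO t = (μ {ω | t < O ω}).toReal)
    (hSD : ∀ t, SD t = (μ {ω | t < D ω}).toReal)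
    (hU : ∀ t, U t = (SD t - SD τ) * (if t ≤ τ then 1 else 0) + SD τ)
    (hhO : ∀ t, hO t = fO t / SO t) (hhD : ∀ t, hD t = fD t / SD t) :
    ∀ s : Set ℝ, MeasurableSet s →
      μ {ω | (if D ω ≤ τ then min (O ω) (D ω) else O ω) ∈ s} =
        ∫⁻ t in s,
          ENNReal.ofReal ((hO t + hD t * (if t ≤ τ then 1 else 0)) * SO t * U t) := by
  intro s hs
  set F : ℝ → ℝ≥0∞ := fun t => ENNReal.ofReal (fO t) with hF
  set G : ℝ → ℝ≥0∞ := fun t => ENNReal.ofReal (fD t) with hG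
  have hFm : Measurable F := hfOm.ennreal_ofReal
  have hGm : Measurable G := hfDm.ennreal_ofReal
  set νO := Measure.map O μ with hνO
  set νD := Measure.map D μ with hνD
  have hνOprob : IsProbabilityMeasure νO := Measure.isProbabilityMeasure_map hOmeas.aemeasurable
  have hνDprob : IsProbabilityMeasure νD := Measure.isProbabilityMeasure_map hDmeas.aemeasurable
  -- survival functions
  have hSOof : ∀ t, ENNReal.ofReal (SO t) = νO (Set.Ioi t) := by
    intro t
    rw [hSO t]
    have h1 : {ω | t < O ω} = O ⁻¹' Set.Ioi t := rfl
    rw [h1, ← Measure.map_apply hOmeas measurableSet_Ioi]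
    exact ENNReal.ofReal_toReal (measure_ne_top _ _)
  have hSDof : ∀ t, ENNReal.ofReal (SD t) = νD (Set.Ioi t) := by
    intro t
    rw [hSD t]
    have h1 : {ω | t < D ω} = D ⁻¹' Set.Ioi t := rfl
    rw [h1, ← Measure.map_apply hDmeas measurableSet_Ioi]
    exact ENNReal.ofReal_toReal (measure_ne_top _ _)
  have hSOnn : ∀ t, 0 ≤ SO t := fun t => by rw [hSO]; exact ENNReal.toReal_nonneg
  have hSDnn : ∀ t, 0 ≤ SD t := fun t => by rw [hSD]; exact ENNReal.toReal_nonneg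
  have hSDanti : Antitone SD := by
    intro a b hab
    rw [hSD, hSD]
    refine ENNReal.toReal_mono (measure_ne_top μ _) (measure_mono fun ω h => lt_of_le_of_lt hab h)
  have hSOanti : Antitone SO := by
    intro a b hab
    rw [hSO, hSO]
    refine ENNReal.toReal_mono (measure_ne_top μ _) (measure_mono fun ω h => lt_of_le_of_lt hab h)
  have hSOm : Measurable SO := hSOanti.measurable
  have hSDm : Measurable SD := hSDanti.measurable
  have hUeq : ∀ t, U t = if t ≤ τ then SD t else SD τ := by
    intro t; rw [hU t]; split <;> ring
  have hUm : Measurable U := by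
    have : U = fun t => if t ≤ τ then SD t else SD τ := funext hUeq
    rw [this]
    exact Measurable.ite (measurableSet_le measurable_id measurable_const) hSDm measurable_const
  have hUnn : ∀ t, 0 ≤ U t := by
    intro t; rw [hUeq t]; split <;> exact hSDnn _
  -- no atoms for νD
  have hatom : ∀ x : ℝ, νD {x} = 0 := fun x =>
    hDmap ▸ (withDensity_absolutelyContinuous volume _) (measure_singleton x)
  -- joint law
  have hjoint : Measure.map (fun ω => (O ω, D ω)) μ = νO.prod νD :=
    (indepFun_iff_map_prod_eq_prod_map_map hOmeas.aemeasurable hDmeas.aemeasurable).mp hindep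
  have htm : Measurable (fun p : ℝ × ℝ => if p.2 ≤ τ then min p.1 p.2 else p.1) :=
    Measurable.ite (measurableSet_le measurable_snd measurable_const)
      (measurable_fst.min measurable_snd) measurable_fst
  set B : Set (ℝ × ℝ) := (fun p : ℝ × ℝ => if p.2 ≤ τ then min p.1 p.2 else p.1) ⁻¹' s with hB
  have hBm : MeasurableSet B := htm hs
  have h1 : {ω | (if D ω ≤ τ then min (O ω) (D ω) else O ω) ∈ s}
      = (fun ω => (O ω, D ω)) ⁻¹' B := rfl
  rw [h1, ← Measure.map_apply (hOmeas.prodMk hDmeas) hBm, hjoint, Measure.prod_apply hBm]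
  -- slice computation
  have hslice : ∀ x, νD (Prod.mk x ⁻¹' B)
      = s.indicator (fun t => ENNReal.ofReal (U t)) x
        + νD (Set.Iio x ∩ Set.Iic τ ∩ s) := by
    intro x
    haveI : NullSingletonClass νD := ⟨hatom⟩
    have hIci : νD (Set.Ici x) = νD (Set.Ioi x) := (measure_congr Ioi_ae_eq_Ici).symm
    by_cases hxs : x ∈ s
    · have hset : Prod.mk x ⁻¹' B
          = (Set.Icc x τ ∪ Set.Ioi τ) ∪ (Set.Iio x ∩ Set.Iic τ ∩ s) := by
        ext y
        simp only [hB, Set.mem_preimage, Set.mem_union, Set.mem_inter_iff, Set.mem_Icc,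
          Set.mem_Ioi, Set.mem_Iio, Set.mem_Iic]
        rcases le_or_gt y τ with h | h
        · rw [if_pos h]
          rcases le_or_gt x y with h2 | h2
          · rw [min_eq_left h2]
            simp [hxs, h, h2, not_lt.mpr h2, not_lt.mpr h]
          · rw [min_eq_right h2.le]
            simp [h, h2, not_le.mpr h2, not_lt.mpr h]
        · rw [if_neg (not_le.mpr h)]
          simp [hxs, h, not_le.mpr h]
      have hdisj : Disjoint (Set.Icc x τ ∪ Set.Ioi τ) (Set.Iio x ∩ Set.Iic τ ∩ s) := by
        rw [Set.disjoint_union_left]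
        constructor
        · exact Set.disjoint_left.mpr fun y hy hy' => absurd hy'.1.1 (not_lt.mpr hy.1)
        · exact Set.disjoint_left.mpr fun y hy hy' => absurd (Set.mem_Iic.mp hy'.1.2) (not_le.mpr hy)
      rw [hset, measure_union hdisj ((measurableSet_Iio.inter measurableSet_Iic).inter hs)]
      congr 1
      rw [Set.indicator_of_mem hxs]
      by_cases hxτ : x ≤ τ
      · rw [Set.Icc_union_Ioi_eq_Ici hxτ, hUeq, if_pos hxτ, hSDof, hIci]
      · rw [Set.Icc_eq_empty hxτ, Set.empty_union, hUeq, if_neg hxτ, hSDof]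
    · have hset : Prod.mk x ⁻¹' B = Set.Iio x ∩ Set.Iic τ ∩ s := by
        ext y
        simp only [hB, Set.mem_preimage, Set.mem_inter_iff, Set.mem_Iio, Set.mem_Iic]
        rcases le_or_gt y τ with h | h
        · rw [if_pos h]
          rcases le_or_gt x y with h2 | h2
          · rw [min_eq_left h2]
            simp [hxs, not_lt.mpr h2]
          · rw [min_eq_right h2.le]
            simp [h, h2]
        · rw [if_neg (not_le.mpr h)]
          simp [hxs, not_le.mpr h]
      rw [hset, Set.indicator_of_notMem hxs, zero_add]
  have hUm' : Measurable fun t => ENNReal.ofReal (U t) := hUm.ennreal_ofReal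
  have hind : Measurable fun x => s.indicator (fun t => ENNReal.ofReal (U t)) x :=
    hUm'.indicator hs
  rw [lintegral_congr hslice, lintegral_add_left hind]
  -- first term
  have hT1 : ∫⁻ x, s.indicator (fun t => ENNReal.ofReal (U t)) x ∂νO
      = ∫⁻ t in s, F t * ENNReal.ofReal (U t) ∂volume := by
    rw [lintegral_indicator hs, hOmap, restrict_withDensity hs,
      lintegral_withDensity_eq_lintegral_mul _ hFm hUm']
    rfl
  -- second term
  have hAm : MeasurableSet (Set.Iic τ ∩ s) := measurableSet_Iic.inter hs
  have hT2 : ∫⁻ x, νD (Set.Iio x ∩ Set.Iic τ ∩ s) ∂νO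
      = ∫⁻ t in s, (Set.Iic τ).indicator (fun y => G y * ENNReal.ofReal (SO y)) t ∂volume := by
    have hkm : Measurable (Function.uncurry fun x y =>
        (Set.Ioi y).indicator (fun _ => (1:ℝ≥0∞)) x * (Set.Iic τ ∩ s).indicator G y) := by
      have he : (fun p : ℝ × ℝ => (Set.Ioi p.2).indicator (fun _ => (1:ℝ≥0∞)) p.1)
          = {p : ℝ × ℝ | p.2 < p.1}.indicator (fun _ => 1) := by
        ext p
        by_cases h : p.2 < p.1 <;> simp [Set.indicator_apply, h]
      exact (he ▸ (measurable_const.indicator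
          (measurableSet_lt measurable_snd measurable_fst) :
            Measurable ({p : ℝ × ℝ | p.2 < p.1}.indicator (fun _ => (1:ℝ≥0∞))))).mul
        ((hGm.indicator hAm).comp measurable_snd)
    have hker : ∀ x, νD (Set.Iio x ∩ Set.Iic τ ∩ s)
        = ∫⁻ y, (Set.Ioi y).indicator (fun _ => (1:ℝ≥0∞)) x
            * (Set.Iic τ ∩ s).indicator G y ∂volume := by
      intro x
      rw [hDmap, withDensity_apply _ ((measurableSet_Iio.inter measurableSet_Iic).inter hs),
        ← lintegral_indicator ((measurableSet_Iio.inter measurableSet_Iic).inter hs)]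
      refine lintegral_congr fun y => ?_
      by_cases h1 : y < x <;> by_cases h2 : y ≤ τ <;> by_cases h3 : y ∈ s <;>
        simp [Set.indicator_apply, Set.mem_inter_iff, h1, h2, h3]
    calc ∫⁻ x, νD (Set.Iio x ∩ Set.Iic τ ∩ s) ∂νO
        = ∫⁻ x, ∫⁻ y, (Set.Ioi y).indicator (fun _ => (1:ℝ≥0∞)) x
            * (Set.Iic τ ∩ s).indicator G y ∂volume ∂νO := lintegral_congr hker
      _ = ∫⁻ y, ∫⁻ x, (Set.Ioi y).indicator (fun _ => (1:ℝ≥0∞)) x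
            * (Set.Iic τ ∩ s).indicator G y ∂νO ∂volume :=
          lintegral_lintegral_swap hkm.aemeasurable
      _ = ∫⁻ y, (Set.Iic τ ∩ s).indicator G y * ENNReal.ofReal (SO y) ∂volume := by
          refine lintegral_congr fun y => ?_
          rw [lintegral_mul_const _ (measurable_const.indicator measurableSet_Ioi),
            lintegral_indicator measurableSet_Ioi, setLIntegral_one, ← hSOof, mul_comm]
      _ = ∫⁻ t in s, (Set.Iic τ).indicator (fun y => G y * ENNReal.ofReal (SO y)) t ∂volume := by
          rw [← lintegral_indicator hs]
          refine lintegral_congr fun y => ?_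
          by_cases h1 : y ∈ s <;> by_cases h2 : y ∈ Set.Iic τ <;>
            simp [Set.indicator_apply, h1, h2, Set.mem_inter_iff]
  rw [hT1, hT2, ← lintegral_add_left (f := fun t => F t * ENNReal.ofReal (U t)) (hFm.mul hUm')]
  -- a.e. identification of the integrand
  have hOz : ∀ᵐ t ∂(volume : Measure ℝ), SO t = 0 → fO t = 0 := by
    filter_upwards [density_zero_of_survival_zero fO hfOm hfOnn νO hOmap] with t ht hSO0
    apply ht
    have h := hSOof t
    rw [hSO0, ENNReal.ofReal_zero] at h
    exact h.symm
  have hDz : ∀ᵐ t ∂(volume : Measure ℝ), SD t = 0 → fD t = 0 := by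
    filter_upwards [density_zero_of_survival_zero fD hfDm hfDnn νD hDmap] with t ht hSD0
    apply ht
    have h := hSDof t
    rw [hSD0, ENNReal.ofReal_zero] at h
    exact h.symm
  refine lintegral_congr_ae (ae_restrict_of_ae ?_)
  filter_upwards [hOz, hDz] with t htO htD
  by_cases htτ : t ≤ τ
  · rw [if_pos htτ, Set.indicator_of_mem (Set.mem_Iic.mpr htτ), mul_one,
      hUeq t, if_pos htτ, hhO, hhD,
      ← ENNReal.ofReal_mul (hfOnn t), ← ENNReal.ofReal_mul (hfDnn t),
      ← ENNReal.ofReal_add (mul_nonneg (hfOnn t) (hSDnn t)) (mul_nonneg (hfDnn t) (hSOnn t))]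
    congr 1
    rcases eq_or_lt_of_le (hSOnn t) with h1 | h1
    · rw [htO h1.symm, ← h1]; ring
    · rcases eq_or_lt_of_le (hSDnn t) with h2 | h2
      · rw [htD h2.symm, ← h2]; ring
      · field_simp
  · rw [if_neg htτ, Set.indicator_of_notMem (fun hc => htτ (Set.mem_Iic.mp hc)), add_zero,
      mul_zero, add_zero, hUeq t, if_neg htτ, hhO, ← ENNReal.ofReal_mul (hfOnn t)]
    congr 1
    rcases eq_or_lt_of_le (hSOnn t) with h1 | h1
    · rw [htO h1.symm, ← h1]; ring
    · field_simp
      try ring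
end
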